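/- Let k be a positive integer, let Λ be a positive-definite even unimodular lattice of rank 24 without roots, let S = (x_1, …, x_24) be a 2k-frame of Λ with associated code C(S) ⊆ (ℤ/2kℤ)^24. Then for every real number q with 0 < q < 1, all the sums below converge absolutely and Σ_{λ∈Λ} q^{⟨λ,λ⟩/2} = Σ_{c∈C(S)} Π_{i=1}^{24} ( Σ_{j∈ℤ} q^{(2kj + c̃_i)²/(4k)} ), where c̃_i ∈ ℤ is any integer lift of the i-th coordinate c_i of c (the inner sum does not depend on the choice of lift). -/

import Mathlib

open scoped BigOperators ENNReal

private lemma aux_rpow_sum {q : ℝ} (hq : 0 < q) {ι : Type*} (s : Finset ι) (e : ι → ℝ) :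
    q ^ (∑ i ∈ s, e i) = ∏ i ∈ s, q ^ (e i) := by
  rw [Real.rpow_def_of_pos hq, Finset.mul_sum, Real.exp_sum]
  exact Finset.prod_congr rfl fun i _ => (Real.rpow_def_of_pos hq _).symm

private lemma aux_tsum_pi_prod : ∀ (n : ℕ) (f : Fin n → ℤ → ℝ≥0∞),
    ∑' a : Fin n → ℤ, ∏ i, f i (a i) = ∏ i, ∑' j : ℤ, f i j := by
  intro n
  induction n with
  | zero =>
    intro f
    rw [tsum_eq_single default (by intro b hb; exact absurd (Subsingleton.elim b default) hb)]
    simp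
  | succ n ih =>
    intro f
    rw [← (Fin.consEquiv (fun _ : Fin (n+1) => ℤ)).tsum_eq]
    have h1 : ∀ p : ℤ × (Fin n → ℤ), ∏ i, f i ((Fin.consEquiv (fun _ : Fin (n+1) => ℤ)) p i)
        = f 0 p.1 * ∏ i : Fin n, f i.succ (p.2 i) := by
      intro p
      rw [Fin.prod_univ_succ]
      simp [Fin.consEquiv]
    simp_rw [h1]
    rw [ENNReal.tsum_prod']
    simp_rw [ENNReal.tsum_mul_left]
    rw [ENNReal.tsum_mul_right, ih (fun i => f i.succ), Fin.prod_univ_succ]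

private lemma aux_summable1 {q : ℝ} (hq0 : 0 < q) (hq1 : q < 1) {k : ℕ} (hk : 0 < k) (a : ℝ) :
    Summable (fun j : ℤ => q ^ ((2 * (k:ℝ) * (j:ℝ) + a) ^ 2 / (4 * (k:ℝ)))) := by
  have hkR : (0:ℝ) < (k:ℝ) := by exact_mod_cast hk
  set M : ℝ := (2 * |a| + 2) / (4 * (k:ℝ)) with hM
  have hbound : ∀ j : ℤ, |(j:ℝ)| - M ≤ (2 * (k:ℝ) * (j:ℝ) + a) ^ 2 / (4 * (k:ℝ)) := by
    intro j
    rw [hM, sub_le_iff_le_add, ← add_div, le_div_iff₀ (by positivity)]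
    rcases le_or_gt 0 (j:ℝ) with hj | hj
    · rw [abs_of_nonneg hj]
      nlinarith [sq_nonneg (2 * (k:ℝ) * (j:ℝ) + a - 1), abs_nonneg a, le_abs_self a,
        neg_abs_le a, mul_nonneg hkR.le hj, sq_nonneg ((j:ℝ))]
    · rw [abs_of_neg hj]
      nlinarith [sq_nonneg (2 * (k:ℝ) * (j:ℝ) + a + 1), abs_nonneg a, le_abs_self a,
        neg_abs_le a, mul_nonneg hkR.le (neg_nonneg.mpr hj.le), sq_nonneg ((j:ℝ))]
  have hgeo : Summable (fun j : ℤ => q ^ (|(j:ℝ)| - M)) := by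
    have h1 : Summable (fun j : ℤ => q ^ (|(j:ℝ)|) / q ^ M) := by
      apply Summable.div_const
      apply Summable.of_nat_of_neg
      · refine Summable.congr (summable_geometric_of_lt_one hq0.le hq1) fun n => ?_
        have h : |(((n:ℤ)):ℝ)| = (n:ℝ) := by push_cast; exact abs_of_nonneg (by positivity)
        rw [h, Real.rpow_natCast]
      · refine Summable.congr (summable_geometric_of_lt_one hq0.le hq1) fun n => ?_
        have h : |(((-(n:ℕ) : ℤ)):ℝ)| = (n:ℝ) := by push_cast; simp
        rw [h, Real.rpow_natCast]
    refine h1.congr fun j => ?_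
    rw [Real.rpow_sub hq0, div_eq_div_iff] <;> positivity
  refine hgeo.of_nonneg_of_le (fun j => by positivity) fun j => ?_
  exact Real.rpow_le_rpow_of_exponent_ge hq0 hq1.le (hbound j)

/-- Let `k ≥ 1`, `Λ` a positive-definite even unimodular lattice of rank 24 without roots,
and `x₁, …, x₂₄` a `2k`-frame of `Λ` with associated code `C(S)`.  Then for `0 < q < 1`,
the theta series of `Λ` equals the sum, over codewords `c ∈ C(S)`, of the product over the
24 coordinates of the one-dimensional theta series `∑_{j∈ℤ} q^{(2kj+c̃ᵢ)²/(4k)}`; all sums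
converge absolutely and the inner sums do not depend on the choice of integer lifts. -/
theorem theta_series_eq_code_sum (k : ℕ) (hk : 0 < k)
    (Λ : Type) [AddCommGroup Λ] [Module ℤ Λ]
    (hfree : Module.Free ℤ Λ) (hrank : Module.finrank ℤ Λ = 24)
    (B : Λ →ₗ[ℤ] Λ →ₗ[ℤ] ℤ)
    (hsymm : ∀ a b : Λ, B a b = B b a)
    (hpos : ∀ a : Λ, a ≠ 0 → 0 < B a a)
    (heven : ∀ a : Λ, Even (B a a))
    (hunimod : Function.Bijective fun a : Λ => B a)
    (hnoroots : ∀ a : Λ, B a a ≠ 2)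
    (x : Fin 24 → Λ)
    (hframe : ∀ i j, B (x i) (x j) = if i = j then (2 * (k : ℤ)) else 0)
    (q : ℝ) (hq0 : 0 < q) (hq1 : q < 1) :
    -- the theta series of `Λ` converges absolutely
    Summable (fun l : Λ => q ^ ((B l l : ℝ) / 2)) ∧
    -- each one-dimensional theta series converges absolutely
    (∀ a : ℤ, Summable (fun j : ℤ =>
        q ^ ((((2 * (k : ℤ) * j + a : ℤ) : ℝ) ^ 2) / (4 * (k : ℝ))))) ∧
    -- the one-dimensional theta series do not depend on the choice of integer lift
    (∀ (m : ZMod (2 * k)) (a b : ℤ), (a : ZMod (2 * k)) = m → (b : ZMod (2 * k)) = m →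
        (∑' j : ℤ, q ^ ((((2 * (k : ℤ) * j + a : ℤ) : ℝ) ^ 2) / (4 * (k : ℝ))))
          = ∑' j : ℤ, q ^ ((((2 * (k : ℤ) * j + b : ℤ) : ℝ) ^ 2) / (4 * (k : ℝ)))) ∧
    -- the theta series of `Λ` equals the code sum of products of 1-dimensional theta series
    (∑' l : Λ, q ^ ((B l l : ℝ) / 2))
      = ∑' c : (Set.range (fun l : Λ => fun i => ((B l (x i) : ℤ) : ZMod (2 * k)))),
          ∏ i : Fin 24,
            ∑' j : ℤ, q ^ ((((2 * (k : ℤ) * j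
                + ((((c : Fin 24 → ZMod (2 * k))) i).val : ℤ) : ℤ) : ℝ) ^ 2)
              / (4 * (k : ℝ))) := by
  haveI := hfree
  haveI : NeZero (2 * k) := ⟨by omega⟩
  have hkZ : (2 * (k:ℤ)) ≠ 0 := by positivity
  have hkR0 : (k:ℝ) ≠ 0 := ne_of_gt (by exact_mod_cast hk)
  -- Step A: injectivity of the frame pairing
  have hA : ∀ l : Λ, (∀ i, B l (x i) = 0) → l = 0 := by
    intro l hl
    by_contra hl0
    have hli : LinearIndependent ℤ (Fin.cons l x : Fin 25 → Λ) := by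
      rw [Fintype.linearIndependent_iff]
      intro g hg
      have h0 : g 0 = 0 := by
        have h := congrArg (B.flip l) hg
        rw [map_sum, map_zero] at h
        simp only [map_smul, smul_eq_mul, LinearMap.flip_apply] at h
        rw [Fin.sum_univ_succ] at h
        simp only [Fin.cons_zero, Fin.cons_succ] at h
        have hz : ∀ i : Fin 24, B (x i) l = 0 := fun i => (hsymm (x i) l).trans (hl i)
        simp only [hz, mul_zero, Finset.sum_const_zero, add_zero] at h
        rcases mul_eq_zero.mp h with h' | h'
        · exact h'
        · exact absurd h' (ne_of_gt (hpos l hl0))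
      have h1 : ∀ j : Fin 24, g j.succ = 0 := by
        intro j
        have h := congrArg (B.flip (x j)) hg
        rw [map_sum, map_zero] at h
        simp only [map_smul, smul_eq_mul, LinearMap.flip_apply] at h
        rw [Fin.sum_univ_succ] at h
        simp only [Fin.cons_zero, Fin.cons_succ, h0, zero_mul, zero_add, hframe,
          mul_ite, mul_zero, Finset.sum_ite_eq', Finset.mem_univ, if_true] at h
        rcases mul_eq_zero.mp h with h' | h'
        · exact h'
        · exact absurd h' hkZ
      intro i
      refine Fin.cases h0 h1 i
    have hr : Module.rank ℤ Λ = 24 := by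
      have h' : (Module.rank ℤ Λ).toNat = 24 := hrank
      exact (Cardinal.toNat_eq_iff (by norm_num)).mp h'
    have hcard := hli.cardinal_le_rank
    rw [Cardinal.mk_fintype, hr] at hcard
    norm_num at hcard
  -- Step B: 2k • l lies in the span of the frame
  have hB2 : ∀ l : Λ, (2 * (k:ℤ)) • l = ∑ i, B l (x i) • x i := by
    intro l
    have key : ∀ j, B ((2 * (k:ℤ)) • l - ∑ i, B l (x i) • x i) (x j) = 0 := by
      intro j
      simp [map_sub, map_zsmul, map_smul, map_sum, LinearMap.sub_apply, LinearMap.smul_apply,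
        LinearMap.sum_apply, smul_eq_mul, hframe, mul_ite, mul_zero, Finset.sum_ite_eq',
        Finset.mem_univ, if_true, Finset.mul_sum]
      all_goals ring
    exact sub_eq_zero.mp (hA _ key)
  -- Step C: norm formula
  have hC : ∀ l : Λ, (2 * (k:ℤ)) * B l l = ∑ i, (B l (x i))^2 := by
    intro l
    have h1 : B ((2*(k:ℤ))•l) ((2*(k:ℤ))•l) = (2*(k:ℤ)) * ((2*(k:ℤ)) * B l l) := by
      simp [map_zsmul, map_smul, LinearMap.smul_apply, smul_eq_mul]
      all_goals ring
    have h2 : B ((2*(k:ℤ))•l) ((2*(k:ℤ))•l) = (2*(k:ℤ)) * ∑ i, (B l (x i))^2 := by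
      conv_lhs => rw [hB2 l]
      simp [map_sum, map_zsmul, map_smul, LinearMap.sum_apply, LinearMap.smul_apply, smul_eq_mul,
        hframe, mul_ite, mul_zero, Finset.sum_ite_eq', Finset.mem_univ, if_true, Finset.mul_sum]
      exact Finset.sum_congr rfl fun i _ => by ring
    exact mul_left_cancel₀ hkZ (h1.symm.trans h2)
  have hexp : ∀ l : Λ, ((B l l : ℤ):ℝ)/2 = ∑ i, ((B l (x i) : ℤ):ℝ)^2 / (4*(k:ℝ)) := by
    intro l
    have h : (2*(k:ℝ)) * ((B l l : ℤ):ℝ) = ∑ i, ((B l (x i):ℤ):ℝ)^2 := by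
      have := congrArg (Int.cast : ℤ → ℝ) (hC l)
      push_cast at this
      exact this
    rw [← Finset.sum_div, ← h]
    field_simp
    ring
  -- one-dimensional summability
  have hS : ∀ a : ℤ, Summable (fun j : ℤ =>
      q ^ ((((2 * (k : ℤ) * j + a : ℤ) : ℝ) ^ 2) / (4 * (k : ℝ)))) := by
    intro a
    refine (aux_summable1 hq0 hq1 hk (a:ℝ)).congr fun j => ?_
    congr 1
    push_cast
    ring
  -- lift independence
  have hlift : ∀ (m : ZMod (2 * k)) (a b : ℤ), (a : ZMod (2 * k)) = m → (b : ZMod (2 * k)) = m →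
      (∑' j : ℤ, q ^ ((((2 * (k : ℤ) * j + a : ℤ) : ℝ) ^ 2) / (4 * (k : ℝ))))
        = ∑' j : ℤ, q ^ ((((2 * (k : ℤ) * j + b : ℤ) : ℝ) ^ 2) / (4 * (k : ℝ))) := by
    intro m a b ha hb
    have hab : ((2*k : ℕ) : ℤ) ∣ b - a := by
      have h' : (a : ZMod (2*k)) = ((b : ℤ) : ZMod (2*k)) := ha.trans hb.symm
      exact (ZMod.intCast_eq_intCast_iff_dvd_sub a b (2*k)).mp h'
    obtain ⟨t, ht⟩ := hab
    have hb' : b = a + 2*(k:ℤ)*t := by push_cast at ht; linarith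
    rw [← (Equiv.addRight t).tsum_eq
      (fun j : ℤ => q ^ ((((2 * (k : ℤ) * j + a : ℤ) : ℝ) ^ 2) / (4 * (k : ℝ))))]
    refine tsum_congr fun j => ?_
    simp only [Equiv.coe_addRight]
    congr 1
    rw [hb']
    push_cast
    ring
  classical
  -- the code and a section of it
  set Cc : Set (Fin 24 → ZMod (2 * k)) :=
    Set.range (fun l : Λ => fun i => ((B l (x i) : ℤ) : ZMod (2 * k))) with hCc
  have hlc0 : ∀ c : ↥Cc, ∃ l : Λ,
      (fun i => ((B l (x i) : ℤ) : ZMod (2 * k))) = (c : Fin 24 → ZMod (2 * k)) := fun c => c.2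
  choose lc hlc2 using hlc0
  have h20 : ∀ b : ℤ, ((2 * (k:ℤ) * b : ℤ) : ZMod (2 * k)) = 0 := by
    intro b
    rw [ZMod.intCast_zmod_eq_zero_iff_dvd]
    exact ⟨b, by push_cast; ring⟩
  have hg2 : ∀ (l : Λ) (b : Fin 24 → ℤ) (i : Fin 24),
      B (l + ∑ j', b j' • x j') (x i) = B l (x i) + 2 * (k:ℤ) * b i := by
    intro l b i
    simp [map_add, map_sum, map_zsmul, LinearMap.add_apply, LinearMap.sum_apply,
      LinearMap.smul_apply, smul_eq_mul, hframe, mul_ite, mul_zero, Finset.sum_ite_eq',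
      Finset.mem_univ, if_true]
    all_goals ring
  set T : ↥Cc × (Fin 24 → ℤ) → Λ := fun p => lc p.1 + ∑ i, p.2 i • x i with hT
  have hgT : ∀ (p : ↥Cc × (Fin 24 → ℤ)) (i : Fin 24),
      ((B (T p) (x i) : ℤ) : ZMod (2 * k)) = (p.1 : Fin 24 → ZMod (2 * k)) i := by
    intro p i
    simp only [hT]
    rw [hg2, Int.cast_add, h20, add_zero]
    exact congrFun (hlc2 p.1) i
  have hTinj : Function.Injective T := by
    intro p p' hpp
    have hc : p.1 = p'.1 := by
      apply Subtype.ext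
      funext i
      have h1 := hgT p i
      rw [hpp] at h1
      exact h1.symm.trans (hgT p' i)
    have hb : p.2 = p'.2 := by
      funext i
      have h := congrArg (fun z => B z (x i)) hpp
      simp only [hT] at h
      rw [hg2, hg2, hc] at h
      have h' : 2 * (k:ℤ) * p.2 i = 2 * (k:ℤ) * p'.2 i := by linarith
      exact mul_left_cancel₀ hkZ h'
    exact Prod.ext_iff.mpr ⟨hc, hb⟩
  have hTsurj : Function.Surjective T := by
    intro l
    have hmem : (fun i => ((B l (x i) : ℤ) : ZMod (2 * k))) ∈ Cc := ⟨l, rfl⟩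
    have hd : ∀ i, ∃ t : ℤ, B (l - lc ⟨_, hmem⟩) (x i) = 2 * (k:ℤ) * t := by
      intro i
      have h0 : ((B (l - lc ⟨_, hmem⟩) (x i) : ℤ) : ZMod (2 * k)) = 0 := by
        rw [map_sub, LinearMap.sub_apply, Int.cast_sub]
        have h1 := congrFun (hlc2 ⟨_, hmem⟩) i
        rw [h1]
        simp
      obtain ⟨t, ht⟩ := (ZMod.intCast_zmod_eq_zero_iff_dvd _ _).mp h0
      exact ⟨t, by push_cast at ht; linarith⟩
    choose b hb using hd
    refine ⟨(⟨_, hmem⟩, b), ?_⟩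
    have key : ∀ j, B (T (⟨_, hmem⟩, b) - l) (x j) = 0 := by
      intro j
      simp only [hT]
      rw [map_sub, LinearMap.sub_apply, hg2]
      have h2 := hb j
      rw [map_sub, LinearMap.sub_apply] at h2
      linarith
    exact sub_eq_zero.mp (hA _ key)
  -- ENNReal-valued summands
  set H : ℤ → ℝ≥0∞ := fun m => ENNReal.ofReal (q ^ (((m:ℝ))^2 / (4 * (k:ℝ)))) with hH
  have hF : ∀ l : Λ, ENNReal.ofReal (q ^ ((B l l : ℝ) / 2)) = ∏ i, H (B l (x i)) := by
    intro l
    rw [hexp l, aux_rpow_sum hq0, ENNReal.ofReal_prod_of_nonneg (fun i _ => by positivity)]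
  have hθ : ∀ a : ℤ, (∑' j : ℤ, H (2 * (k:ℤ) * j + a))
      = ENNReal.ofReal (∑' j : ℤ,
          q ^ ((((2 * (k : ℤ) * j + a : ℤ) : ℝ) ^ 2) / (4 * (k : ℝ)))) := by
    intro a
    rw [ENNReal.ofReal_tsum_of_nonneg (fun j => by positivity) (hS a)]
  have hvlift : ∀ (c : ↥Cc) (i : Fin 24),
      ((((c : Fin 24 → ZMod (2 * k)) i).val : ℤ) : ZMod (2 * k))
        = (c : Fin 24 → ZMod (2 * k)) i := by
    intro c i
    push_cast
    simp [ZMod.natCast_val, ZMod.cast_id]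
  -- the main identity, in ℝ≥0∞
  have hmain : (∑' l : Λ, ENNReal.ofReal (q ^ ((B l l : ℝ) / 2)))
      = ∑' c : ↥Cc, ∏ i : Fin 24, ENNReal.ofReal
          (∑' j : ℤ, q ^ ((((2 * (k : ℤ) * j
              + ((((c : Fin 24 → ZMod (2 * k))) i).val : ℤ) : ℤ) : ℝ) ^ 2)
            / (4 * (k : ℝ)))) := by
    calc (∑' l : Λ, ENNReal.ofReal (q ^ ((B l l : ℝ) / 2)))
        = ∑' l : Λ, ∏ i, H (B l (x i)) := tsum_congr hF
      _ = ∑' p : ↥Cc × (Fin 24 → ℤ),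
            ∏ i, H (B ((Equiv.ofBijective T ⟨hTinj, hTsurj⟩) p) (x i)) :=
          ((Equiv.ofBijective T ⟨hTinj, hTsurj⟩).tsum_eq
            (fun l => ∏ i, H (B l (x i)))).symm
      _ = ∑' c : ↥Cc, ∑' b : Fin 24 → ℤ, ∏ i, H (2 * (k:ℤ) * b i + B (lc c) (x i)) := by
          rw [ENNReal.tsum_prod']
          refine tsum_congr fun c => tsum_congr fun b => Finset.prod_congr rfl fun i _ => ?_
          congr 1
          change B (T (c, b)) (x i) = _
          simp only [hT]
          rw [hg2]
          ring
      _ = ∑' c : ↥Cc, ∏ i, ∑' j : ℤ, H (2 * (k:ℤ) * j + B (lc c) (x i)) :=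
          tsum_congr fun c =>
            aux_tsum_pi_prod 24 (fun i j => H (2 * (k:ℤ) * j + B (lc c) (x i)))
      _ = _ := by
          refine tsum_congr fun c => Finset.prod_congr rfl fun i _ => ?_
          rw [hθ (B (lc c) (x i))]
          congr 1
          exact hlift ((c : Fin 24 → ZMod (2 * k)) i) _ _
            (congrFun (hlc2 c) i) (hvlift c i)
  haveI : Fintype ↥Cc := Fintype.ofFinite _
  have hfinR : (∑' c : ↥Cc, ∏ i : Fin 24, ENNReal.ofReal
      (∑' j : ℤ, q ^ ((((2 * (k : ℤ) * j
          + ((((c : Fin 24 → ZMod (2 * k))) i).val : ℤ) : ℤ) : ℝ) ^ 2)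
        / (4 * (k : ℝ))))) ≠ ⊤ := by
    rw [tsum_fintype]
    exact (ENNReal.sum_lt_top.mpr fun c _ =>
      ENNReal.prod_lt_top fun i _ => ENNReal.ofReal_lt_top).ne
  have hsum1 : Summable (fun l : Λ => q ^ ((B l l : ℝ) / 2)) := by
    have h := ENNReal.summable_toReal (by rw [hmain]; exact hfinR)
    exact h.congr fun l => ENNReal.toReal_ofReal (by positivity)
  refine ⟨hsum1, hS, hlift, ?_⟩
  have h1 : (∑' l : Λ, q ^ ((B l l : ℝ) / 2))
      = (∑' l : Λ, ENNReal.ofReal (q ^ ((B l l : ℝ) / 2))).toReal := by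
    rw [ENNReal.tsum_toReal_eq (fun l => ENNReal.ofReal_ne_top)]
    exact tsum_congr fun l => (ENNReal.toReal_ofReal (by positivity)).symm
  rw [h1, hmain, tsum_fintype,
    ENNReal.toReal_sum (fun c _ => (ENNReal.prod_lt_top fun i _ => ENNReal.ofReal_lt_top).ne),
    tsum_fintype]
  refine Finset.sum_congr rfl fun c _ => ?_
  rw [ENNReal.toReal_prod]
  exact Finset.prod_congr rfl fun i _ =>
    ENNReal.toReal_ofReal (tsum_nonneg fun j => by positivity)
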